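/- Let $C_n = \frac{1}{n+1}\binom{2n}{n}$ be the Catalan numbers, and let $d_n^{(k)} = \det(C_{i+j+k-2})_{1 \le i,j \le n}$. Then $d_n^{(k)} = \prod_{1 \le i \le j \le k-1} \frac{i+j+2n}{i+j}$. In particular, $d_n^{(0)} = d_n^{(1)} = 1$ for all $n$. -/

import Mathlib

open Finset
open Matrix


variable {R : Type*} [CommRing R]

lemma det_col_single {p : ℕ} (M : Matrix (Fin (p+1)) (Fin (p+1)) R) (i j : Fin (p+1)) (c : R)
    (h : ∀ r, M r j = if r = i then c else 0) :
    M.det = (-1) ^ ((i:ℕ) + (j:ℕ)) * c * (M.submatrix i.succAbove j.succAbove).det := by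
  rw [Matrix.det_succ_column M j, Finset.sum_eq_single i]
  · rw [h i]; simp
  · intro b _ hb; rw [h b]; simp [hb]
  · simp

lemma det_row_single {p : ℕ} (M : Matrix (Fin (p+1)) (Fin (p+1)) R) (i j : Fin (p+1)) (c : R)
    (h : ∀ s, M i s = if s = j then c else 0) :
    M.det = (-1) ^ ((i:ℕ) + (j:ℕ)) * c * (M.submatrix i.succAbove j.succAbove).det := by
  rw [Matrix.det_succ_row M i, Finset.sum_eq_single j]
  · rw [h j]; simp
  · intro b _ hb; rw [h b]; simp [hb]
  · simp

lemma adj_corner {p : ℕ} (A : Matrix (Fin (p+1)) (Fin (p+1)) R) (i j : Fin (p+1)) :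
    A.adjugate i j = (-1) ^ ((i:ℕ) + (j:ℕ)) * (A.submatrix j.succAbove i.succAbove).det := by
  have hrow : ∀ s, (A.updateRow j (Pi.single i 1)) j s = if s = i then (1:R) else 0 := by
    intro s; simp [Matrix.updateRow_apply, Pi.single_apply]
  have hsub : (A.updateRow j (Pi.single i 1)).submatrix j.succAbove i.succAbove
      = A.submatrix j.succAbove i.succAbove := by
    apply Matrix.ext; intro a b
    simp [Matrix.submatrix_apply, Matrix.updateRow_apply, Fin.succAbove_ne]
  rw [Matrix.adjugate_apply, det_row_single (A.updateRow j (Pi.single i 1)) j i 1 hrow,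
    hsub, Nat.add_comm (j:ℕ) (i:ℕ), mul_one]

def midMap (m : ℕ) : Fin m → Fin (m+2) := fun i => i.succ.castSucc

def cornerEquiv (m : ℕ) : Fin 2 ⊕ Fin m ≃ Fin (m+2) where
  toFun := Sum.elim (fun t => if t = 0 then 0 else Fin.last (m+1)) (midMap m)
  invFun := fun x =>
    if h0 : (x:ℕ) = 0 then Sum.inl 0
    else if hl : (x:ℕ) = m+1 then Sum.inl 1
    else Sum.inr ⟨(x:ℕ)-1, by have := x.isLt; omega⟩
  left_inv := by
    rintro (t | i)
    · fin_cases t <;> simp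
    · have h1 : ((midMap m i : Fin (m+2)) : ℕ) = (i:ℕ)+1 := rfl
      have := i.isLt
      simp only [Sum.elim_inr, h1]
      rw [dif_neg (by omega), dif_neg (by omega)]
      congr 1
  right_inv := by
    intro x
    dsimp only
    by_cases h0 : (x:ℕ) = 0
    · rw [dif_pos h0]; simp [Fin.ext_iff, h0.symm]; exact Nat.le_of_lt_succ x.isLt
    · rw [dif_neg h0]
      by_cases hl : (x:ℕ) = m+1
      · rw [dif_pos hl]
        simp only [Sum.elim_inl]
        rw [if_neg (by decide)]
        exact Fin.ext (by simp [hl])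
      · rw [dif_neg hl]
        simp only [Sum.elim_inr]
        exact Fin.ext (by simp [midMap]; omega)

@[simp] lemma cornerEquiv_inl0 (m : ℕ) : cornerEquiv m (Sum.inl 0) = 0 := rfl
@[simp] lemma cornerEquiv_inl1 (m : ℕ) : cornerEquiv m (Sum.inl 1) = Fin.last (m+1) := rfl
@[simp] lemma cornerEquiv_inr (m : ℕ) (i : Fin m) : cornerEquiv m (Sum.inr i) = midMap m i := rfl

lemma midMap_ne_zero {m : ℕ} (i : Fin m) : midMap m i ≠ 0 := by
  have := i.isLt; simp [midMap, Fin.ext_iff]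

lemma midMap_ne_last {m : ℕ} (i : Fin m) : midMap m i ≠ Fin.last (m+1) := by
  have := i.isLt; simp [midMap, Fin.ext_iff]; omega

lemma midMap_inj {m : ℕ} : Function.Injective (midMap m) := by
  intro a b h
  have h2 := congrArg Fin.val h
  simp only [midMap] at h2
  exact Fin.ext (by simpa using h2)

lemma corner_or {m : ℕ} (j : Fin 2) :
    cornerEquiv m (Sum.inl j) = 0 ∨ cornerEquiv m (Sum.inl j) = Fin.last (m+1) := by
  fin_cases j <;> simp

lemma key {m : ℕ} (A : Matrix (Fin (m+2)) (Fin (m+2)) R) :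
    A.det ^ 2 * (A.submatrix (midMap m) (midMap m)).det =
    A.det * ((A.submatrix (Fin.succAbove 0) (Fin.succAbove 0)).det *
             (A.submatrix (Fin.succAbove (Fin.last (m+1))) (Fin.succAbove (Fin.last (m+1)))).det
           - (A.submatrix (Fin.succAbove (Fin.last (m+1))) (Fin.succAbove 0)).det *
             (A.submatrix (Fin.succAbove 0) (Fin.succAbove (Fin.last (m+1)))).det) := by
  set B : Matrix (Fin (m+2)) (Fin (m+2)) R :=
    Matrix.of (fun s t => if t = 0 ∨ t = Fin.last (m+1) then A.adjugate s t
      else (1 : Matrix (Fin (m+2)) (Fin (m+2)) R) s t) with hB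
  have hAB : ∀ s t, (A * B) s t =
      if t = 0 ∨ t = Fin.last (m+1)
        then A.det * (1 : Matrix (Fin (m+2)) (Fin (m+2)) R) s t else A s t := by
    intro s t
    rw [Matrix.mul_apply]
    by_cases h : t = 0 ∨ t = Fin.last (m+1)
    · simp only [hB, Matrix.of_apply, if_pos h]
      have h2 : ∑ r, A s r * A.adjugate r t = (A * A.adjugate) s t := (Matrix.mul_apply).symm
      rw [h2, Matrix.mul_adjugate, Matrix.smul_apply, smul_eq_mul]
    · simp only [hB, Matrix.of_apply, if_neg h, Matrix.one_apply, mul_ite, mul_one, mul_zero]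
      rw [Finset.sum_ite_eq' Finset.univ t (fun r => A s r)]
      simp
  have hABblock : (A * B).submatrix (cornerEquiv m) (cornerEquiv m) =
      Matrix.fromBlocks (A.det • (1 : Matrix (Fin 2) (Fin 2) R))
        (Matrix.of fun (i : Fin 2) (j : Fin m) => A (cornerEquiv m (Sum.inl i)) (midMap m j))
        0 (A.submatrix (midMap m) (midMap m)) := by
    apply Matrix.ext
    rintro (i | i) (j | j)
    · simp only [Matrix.submatrix_apply, Matrix.fromBlocks_apply₁₁]
      rw [hAB, if_pos (corner_or j)]
      simp only [Matrix.smul_apply, smul_eq_mul]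
      fin_cases i <;> fin_cases j <;>
        simp [Matrix.one_apply, Fin.ext_iff]
    · simp only [Matrix.submatrix_apply, Matrix.fromBlocks_apply₁₂, cornerEquiv_inr]
      rw [hAB, if_neg (by push_neg; exact ⟨midMap_ne_zero j, midMap_ne_last j⟩)]
      rfl
    · simp only [Matrix.submatrix_apply, Matrix.fromBlocks_apply₂₁, cornerEquiv_inr,
        Matrix.zero_apply]
      rw [hAB, if_pos (corner_or j)]
      have h3 : (1 : Matrix (Fin (m+2)) (Fin (m+2)) R) (midMap m i) (cornerEquiv m (Sum.inl j))
          = 0 := by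
        apply Matrix.one_apply_ne
        rcases corner_or (m := m) j with h | h <;> rw [h]
        · exact midMap_ne_zero i
        · exact midMap_ne_last i
      rw [h3, mul_zero]
    · simp only [Matrix.submatrix_apply, Matrix.fromBlocks_apply₂₂, cornerEquiv_inr]
      rw [hAB, if_neg (by push_neg; exact ⟨midMap_ne_zero j, midMap_ne_last j⟩)]
  have hBblock : B.submatrix (cornerEquiv m) (cornerEquiv m) =
      Matrix.fromBlocks
        (!![A.adjugate 0 0, A.adjugate 0 (Fin.last (m+1));
            A.adjugate (Fin.last (m+1)) 0, A.adjugate (Fin.last (m+1)) (Fin.last (m+1))])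
        0 (Matrix.of fun (i : Fin m) (j : Fin 2) =>
            A.adjugate (midMap m i) (cornerEquiv m (Sum.inl j)))
        (1 : Matrix (Fin m) (Fin m) R) := by
    apply Matrix.ext
    rintro (i | i) (j | j)
    · simp only [Matrix.submatrix_apply, Matrix.fromBlocks_apply₁₁, hB, Matrix.of_apply]
      rw [if_pos (corner_or j)]
      fin_cases i <;> fin_cases j <;> simp
    · simp only [Matrix.submatrix_apply, Matrix.fromBlocks_apply₁₂, cornerEquiv_inr, hB,
        Matrix.of_apply, Matrix.zero_apply]
      rw [if_neg (by push_neg; exact ⟨midMap_ne_zero j, midMap_ne_last j⟩)]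
      apply Matrix.one_apply_ne
      rcases corner_or (m := m) i with h | h <;> rw [h]
      · exact (midMap_ne_zero j).symm
      · exact (midMap_ne_last j).symm
    · simp only [Matrix.submatrix_apply, Matrix.fromBlocks_apply₂₁, cornerEquiv_inr, hB,
        Matrix.of_apply]
      rw [if_pos (corner_or j)]
    · simp only [Matrix.submatrix_apply, Matrix.fromBlocks_apply₂₂, cornerEquiv_inr, hB,
        Matrix.of_apply]
      rw [if_neg (by push_neg; exact ⟨midMap_ne_zero j, midMap_ne_last j⟩)]
      simp [Matrix.one_apply, midMap_inj.eq_iff]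
  have hdetAB : (A * B).det = A.det ^ 2 * (A.submatrix (midMap m) (midMap m)).det := by
    rw [← Matrix.det_submatrix_equiv_self (cornerEquiv m) (A * B), hABblock,
      Matrix.det_fromBlocks_zero₂₁, Matrix.det_smul, Matrix.det_one]
    simp [sq]
  have hdetB : B.det =
      (A.submatrix (Fin.succAbove 0) (Fin.succAbove 0)).det *
        (A.submatrix (Fin.succAbove (Fin.last (m+1))) (Fin.succAbove (Fin.last (m+1)))).det
      - (A.submatrix (Fin.succAbove (Fin.last (m+1))) (Fin.succAbove 0)).det *
        (A.submatrix (Fin.succAbove 0) (Fin.succAbove (Fin.last (m+1)))).det := by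
    rw [← Matrix.det_submatrix_equiv_self (cornerEquiv m) B, hBblock,
      Matrix.det_fromBlocks_zero₁₂, Matrix.det_one, mul_one, Matrix.det_fin_two_of]
    rw [adj_corner, adj_corner, adj_corner, adj_corner]
    have hlv : ((Fin.last (m+1) : Fin (m+2)) : ℕ) = m + 1 := rfl
    have hsq : ∀ s : ℕ, ((-1 : R) ^ s) * ((-1 : R) ^ s) = 1 := by
      intro s
      rw [← pow_add, ← two_mul, pow_mul, neg_one_sq, one_pow]
    simp only [Fin.val_zero, hlv, Nat.add_zero, Nat.zero_add, pow_zero, one_mul]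
    have h2 : (-1 : R) ^ (m * 2) = 1 := by rw [mul_comm, pow_mul, neg_one_sq, one_pow]
    ring_nf
    rw [h2]
    ring
  calc A.det ^ 2 * (A.submatrix (midMap m) (midMap m)).det
      = (A * B).det := hdetAB.symm
    _ = A.det * B.det := by rw [Matrix.det_mul]
    _ = _ := by rw [hdetB]

lemma dj {m : ℕ} (A : Matrix (Fin (m+2)) (Fin (m+2)) ℚ) :
    A.det * (A.submatrix (midMap m) (midMap m)).det =
      (A.submatrix (Fin.succAbove 0) (Fin.succAbove 0)).det *
        (A.submatrix (Fin.succAbove (Fin.last (m+1))) (Fin.succAbove (Fin.last (m+1)))).det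
      - (A.submatrix (Fin.succAbove (Fin.last (m+1))) (Fin.succAbove 0)).det *
        (A.submatrix (Fin.succAbove 0) (Fin.succAbove (Fin.last (m+1)))).det := by
  set M : Matrix (Fin (m+2)) (Fin (m+2)) (Polynomial ℚ) := Matrix.charmatrix (-A) with hM
  have hMdet : M.det ≠ 0 := (Matrix.charpoly_monic (-A)).ne_zero
  have hcancel : M.det * (M.submatrix (midMap m) (midMap m)).det =
      (M.submatrix (Fin.succAbove 0) (Fin.succAbove 0)).det *
        (M.submatrix (Fin.succAbove (Fin.last (m+1))) (Fin.succAbove (Fin.last (m+1)))).det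
      - (M.submatrix (Fin.succAbove (Fin.last (m+1))) (Fin.succAbove 0)).det *
        (M.submatrix (Fin.succAbove 0) (Fin.succAbove (Fin.last (m+1)))).det := by
    apply mul_left_cancel₀ hMdet
    have h := key M
    rw [pow_two, mul_assoc] at h
    exact h
  have hmap : M.map (Polynomial.evalRingHom (0:ℚ)) = A := by
    apply Matrix.ext
    intro i j
    by_cases hij : i = j
    · subst hij
      simp [hM, Matrix.charmatrix_apply_eq]
    · simp [hM, Matrix.charmatrix_apply_ne _ _ _ hij]
  have := congrArg (Polynomial.evalRingHom (0:ℚ)) hcancel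
  simpa only [_root_.map_mul, map_sub, RingHom.map_det, RingHom.mapMatrix_apply,
    ← Matrix.submatrix_map, hmap] using this

def hank (n k : ℕ) : Matrix (Fin n) (Fin n) ℚ :=
  Matrix.of fun i j : Fin n => (catalan ((i : ℕ) + (j : ℕ) + k) : ℚ)

lemma hankel_rec (m k : ℕ) :
    (hank (m+2) k).det * (hank m (k+2)).det =
      (hank (m+1) (k+2)).det * (hank (m+1) k).det
      - (hank (m+1) (k+1)).det * (hank (m+1) (k+1)).det := by
  have h := dj (hank (m+2) k)
  have e1 : (hank (m+2) k).submatrix (Fin.succAbove 0) (Fin.succAbove 0) = hank (m+1) (k+2) := by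
    apply Matrix.ext; intro i j
    simp only [Matrix.submatrix_apply, Fin.succAbove_zero, hank, Matrix.of_apply, Fin.val_succ]
    exact congrArg (fun t : ℕ => ((catalan t : ℕ) : ℚ)) (by omega)
  have e2 : (hank (m+2) k).submatrix (Fin.succAbove (Fin.last (m+1)))
      (Fin.succAbove (Fin.last (m+1))) = hank (m+1) k := by
    apply Matrix.ext; intro i j
    simp only [Matrix.submatrix_apply, Fin.succAbove_last, hank, Matrix.of_apply,
      Fin.coe_castSucc]
  have e3 : (hank (m+2) k).submatrix (Fin.succAbove (Fin.last (m+1))) (Fin.succAbove 0)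
      = hank (m+1) (k+1) := by
    apply Matrix.ext; intro i j
    simp only [Matrix.submatrix_apply, Fin.succAbove_last, Fin.succAbove_zero, hank,
      Matrix.of_apply, Fin.coe_castSucc, Fin.val_succ]
    exact congrArg (fun t : ℕ => ((catalan t : ℕ) : ℚ)) (by omega)
  have e4 : (hank (m+2) k).submatrix (Fin.succAbove 0) (Fin.succAbove (Fin.last (m+1)))
      = hank (m+1) (k+1) := by
    apply Matrix.ext; intro i j
    simp only [Matrix.submatrix_apply, Fin.succAbove_last, Fin.succAbove_zero, hank,
      Matrix.of_apply, Fin.coe_castSucc, Fin.val_succ]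
    exact congrArg (fun t : ℕ => ((catalan t : ℕ) : ℚ)) (by omega)
  have e5 : (hank (m+2) k).submatrix (midMap m) (midMap m) = hank m (k+2) := by
    apply Matrix.ext; intro i j
    simp only [Matrix.submatrix_apply, midMap, hank, Matrix.of_apply, Fin.coe_castSucc,
      Fin.val_succ]
    exact congrArg (fun t : ℕ => ((catalan t : ℕ) : ℚ)) (by omega)
  rw [e1, e2, e3, e4, e5] at h
  linarith [h]

lemma factorial_eq_succ {a b : ℕ} (h : a = b + 1) : a.factorial = (b+1) * b.factorial := by
  subst h; exact Nat.factorial_succ b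

def Sprod (n k : ℕ) : ℕ := ∏ j ∈ Icc 1 (k-1), ∏ i ∈ Icc 1 j, (i + j + 2*n)
def Dprod (k : ℕ) : ℕ := ∏ j ∈ Icc 1 (k-1), ∏ i ∈ Icc 1 j, (i + j)

lemma Sprod_pos (n k : ℕ) : 0 < Sprod n k :=
  Finset.prod_pos fun j hj => Finset.prod_pos fun i hi => by
    have := Finset.mem_Icc.mp hi; omega

lemma Dprod_pos (k : ℕ) : 0 < Dprod k :=
  Finset.prod_pos fun j hj => Finset.prod_pos fun i hi => by
    have := Finset.mem_Icc.mp hi; omega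

lemma T1 (c j : ℕ) : c.factorial * ∏ i ∈ Icc 1 j, (i + c) = (c + j).factorial := by
  induction j with
  | zero => simp
  | succ t ih =>
    rw [Finset.prod_Icc_succ_top (by omega), ← mul_assoc, ih]
    rw [show c + (t+1) = (c+t) + 1 by ring, Nat.factorial_succ]
    ring

lemma T2 (c t : ℕ) :
    (2*c+2).factorial * ∏ j ∈ Icc 1 t, ((2*c+2*j+1) * (2*c+2*j+2)) =
      (2*c+2*t+2).factorial := by
  induction t with
  | zero => simp
  | succ t ih =>
    rw [Finset.prod_Icc_succ_top (by omega), ← mul_assoc, ih,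
      factorial_eq_succ (show 2*c+2*(t+1)+2 = (2*c+2*(t+1)+1) + 1 by ring),
      factorial_eq_succ (show 2*c+2*(t+1)+1 = (2*c+2*t+2) + 1 by ring)]
    ring

lemma Sstep (m k : ℕ) :
    Sprod m (k+1) = Sprod m k * ∏ i ∈ Icc 1 k, (i + k + 2*m) := by
  rcases k with _ | t
  · simp [Sprod]
  · rw [Sprod, show (t+1+1) - 1 = t + 1 by omega,
      Finset.prod_Icc_succ_top (by omega : 1 ≤ t + 1)]
    rfl

lemma Dstep (k : ℕ) : Dprod (k+1) = Dprod k * ∏ i ∈ Icc 1 k, (i + k) := by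
  rcases k with _ | t
  · simp [Dprod]
  · rw [Dprod, show (t+1+1) - 1 = t + 1 by omega,
      Finset.prod_Icc_succ_top (by omega : 1 ≤ t + 1)]
    rfl

lemma A1 (m k : ℕ) :
    Sprod m (k+1) * (2*m+k).factorial = Sprod m k * (2*m+2*k).factorial := by
  rw [Sstep]
  have h := T1 (k + 2*m) k
  have h2 : ∏ i ∈ Icc 1 k, (i + k + 2*m) = ∏ i ∈ Icc 1 k, (i + (k + 2*m)) :=
    Finset.prod_congr rfl fun i _ => by omega
  rw [h2]
  calc Sprod m k * (∏ i ∈ Icc 1 k, (i + (k + 2*m))) * (2*m+k).factorial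
      = Sprod m k * ((k + 2*m).factorial * ∏ i ∈ Icc 1 k, (i + (k + 2*m))) := by
        rw [show (2*m+k) = (k+2*m) by ring]; ring
    _ = Sprod m k * ((k + 2*m) + k).factorial := by rw [h]
    _ = Sprod m k * (2*m+2*k).factorial := by rw [show (k+2*m)+k = 2*m+2*k by ring]

lemma A2 (k : ℕ) : Dprod (k+1) * k.factorial = Dprod k * (2*k).factorial := by
  rw [Dstep]
  have h := T1 k k
  calc Dprod k * (∏ i ∈ Icc 1 k, (i + k)) * k.factorial
      = Dprod k * (k.factorial * ∏ i ∈ Icc 1 k, (i + k)) := by ring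
    _ = Dprod k * (k + k).factorial := by rw [h]
    _ = Dprod k * (2*k).factorial := by rw [show k+k = 2*k by ring]

lemma A3nat (m k : ℕ) :
    Sprod (m+1) k * ∏ j ∈ Icc 1 (k-1), ((2*m+j+1) * (2*m+j+2)) =
    Sprod m k * ∏ j ∈ Icc 1 (k-1), ((2*m+2*j+1) * (2*m+2*j+2)) := by
  rw [Sprod, Sprod, ← Finset.prod_mul_distrib, ← Finset.prod_mul_distrib]
  apply Finset.prod_congr rfl
  intro j _
  apply Nat.eq_of_mul_eq_mul_left (Nat.factorial_pos (2*m+j))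
  calc (2*m+j).factorial * ((∏ i ∈ Icc 1 j, (i + j + 2*(m+1))) * ((2*m+j+1) * (2*m+j+2)))
      = ((2*m+j+2)*((2*m+j+1) * (2*m+j).factorial)) * ∏ i ∈ Icc 1 j, (i + (j + 2*m+2)) := by
        rw [Finset.prod_congr rfl (fun i _ => by omega : ∀ i ∈ Icc 1 j,
          i + j + 2*(m+1) = i + (j + 2*m+2))]
        ring
    _ = (j+2*m+2).factorial * ∏ i ∈ Icc 1 j, (i + (j + 2*m+2)) := by
        rw [factorial_eq_succ (show j+2*m+2 = (j+2*m+1) + 1 by ring),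
          factorial_eq_succ (show j+2*m+1 = (j+2*m) + 1 by ring),
          show (2*m+j) = j+2*m by ring]
    _ = ((j+2*m+2) + j).factorial := T1 (j+2*m+2) j
    _ = (2*m+j).factorial * ((∏ i ∈ Icc 1 j, (i + j + 2*m)) * ((2*m+2*j+1) * (2*m+2*j+2))) := by
        rw [Finset.prod_congr rfl (fun i _ => by omega : ∀ i ∈ Icc 1 j,
          i + j + 2*m = i + (j + 2*m)), show (2*m+j) = (j+2*m) by ring]
        rw [← mul_assoc, T1 (j+2*m) j,
          factorial_eq_succ (show (j+2*m+2)+j = ((j+2*m)+j+1) + 1 by ring),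
          factorial_eq_succ (show (j+2*m)+j+1 = ((j+2*m)+j) + 1 by ring)]
        ring

lemma A1' (m k a b : ℕ) (ha : a = 2*m+k) (hb : b = 2*m+2*k) :
    Sprod m (k+1) * a.factorial = Sprod m k * b.factorial := by
  subst ha hb; exact A1 m k

lemma A3gen (m k : ℕ) :
    Sprod (m+1) k * ((2*m+k).factorial * (2*m+k+1).factorial) =
    Sprod m k * ((2*m+2*k).factorial * (2*m+1).factorial) := by
  rcases k with _ | t
  · simp [Sprod]
  · have P1 : (2*m+1).factorial * ∏ j ∈ Icc 1 t, (2*m+j+1) = (2*m+t+1).factorial := by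
      rw [Finset.prod_congr rfl (fun j _ => by omega : ∀ j ∈ Icc 1 t, 2*m+j+1 = j + (2*m+1)),
        T1 (2*m+1) t]
      exact congrArg Nat.factorial (by omega)
    have P2 : (2*m+2).factorial * ∏ j ∈ Icc 1 t, (2*m+j+2) = (2*m+t+2).factorial := by
      rw [Finset.prod_congr rfl (fun j _ => by omega : ∀ j ∈ Icc 1 t, 2*m+j+2 = j + (2*m+2)),
        T1 (2*m+2) t]
      exact congrArg Nat.factorial (by omega)
    have P3 := T2 m t
    have hmain := A3nat m (t+1)
    rw [show (t+1) - 1 = t by omega, Finset.prod_mul_distrib] at hmain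
    show Sprod (m+1) (t+1) * ((2*m+t+1).factorial * (2*m+t+2).factorial) =
      Sprod m (t+1) * ((2*m+2*t+2).factorial * (2*m+1).factorial)
    calc Sprod (m+1) (t+1) * ((2*m+t+1).factorial * (2*m+t+2).factorial)
        = Sprod (m+1) (t+1) * (((2*m+1).factorial * ∏ j ∈ Icc 1 t, (2*m+j+1)) *
            ((2*m+2).factorial * ∏ j ∈ Icc 1 t, (2*m+j+2))) := by rw [P1, P2]
      _ = (Sprod (m+1) (t+1) * ((∏ j ∈ Icc 1 t, (2*m+j+1)) * ∏ j ∈ Icc 1 t, (2*m+j+2))) *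
            ((2*m+1).factorial * (2*m+2).factorial) := by ring
      _ = (Sprod m (t+1) * ∏ j ∈ Icc 1 t, ((2*m+2*j+1) * (2*m+2*j+2))) *
            ((2*m+1).factorial * (2*m+2).factorial) := by
          rw [hmain, Finset.prod_mul_distrib]
      _ = Sprod m (t+1) * (((2*m+2).factorial * ∏ j ∈ Icc 1 t, ((2*m+2*j+1) * (2*m+2*j+2))) *
            (2*m+1).factorial) := by ring
      _ = Sprod m (t+1) * ((2*m+2*t+2).factorial * (2*m+1).factorial) := by rw [P3]

lemma A3' (m k a b c d : ℕ) (ha : a = 2*m+k) (hb : b = 2*m+k+1) (hc : c = 2*m+2*k)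
    (hd : d = 2*m+1) :
    Sprod (m+1) k * (a.factorial * b.factorial) = Sprod m k * (c.factorial * d.factorial) := by
  subst ha hb hc hd; exact A3gen m k

lemma A2' (k a b : ℕ) (ha : a = k) (hb : b = 2*k) :
    Dprod (k+1) * a.factorial = Dprod k * b.factorial := by
  subst ha hb; exact A2 _

lemma hFne (x : ℕ) : ((x.factorial : ℕ) : ℚ) ≠ 0 :=
  Nat.cast_ne_zero.mpr (Nat.factorial_pos x).ne'

lemma hSne (x y : ℕ) : ((Sprod x y : ℕ) : ℚ) ≠ 0 := Nat.cast_ne_zero.mpr (Sprod_pos x y).ne'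
lemma hDne (y : ℕ) : ((Dprod y : ℕ) : ℚ) ≠ 0 := Nat.cast_ne_zero.mpr (Dprod_pos y).ne'



set_option maxHeartbeats 1000000 in
lemma endgame (a d f1 F3 fo fk f2k f2 f3 F4 f2k2 fk1 x y : ℚ)
    (h2 : f2 = (2*x+y+3)*f1) (h3 : f3 = (2*x+3)*((2*x+2)*fo))
    (h4 : F4 = (2*x+2*y+4)*((2*x+2*y+3)*F3))
    (h5 : f2k2 = (2*y+2)*((2*y+1)*f2k)) (h6 : fk1 = (y+1)*fk)
    (hF1 : f1 ≠ 0) (hF3 : F3 ≠ 0) (hFo : fo ≠ 0) (hFk : fk ≠ 0) (hF2k : f2k ≠ 0)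
    (hd : d ≠ 0) (hx : 0 ≤ x) (hy : 0 ≤ y) :
    a * f3 / f2 / (d * fk / f2k) * (a * f1 / fo / (d * f2k2 / fk1)) + (a/d)^2
    = a * f1 / F3 / (d * fk / f2k) * (a * F4 / f2 / (d * f2k2 / fk1)) := by
  subst h2 h3 h4 h5 h6
  have c1 : 2*x+y+3 ≠ 0 := by positivity
  have c2 : y+1 ≠ 0 := by positivity
  have c3 : 2*y+1 ≠ 0 := by positivity
  have c4 : 2*y+2 ≠ 0 := by positivity
  field_simp
  ring

set_option maxHeartbeats 2000000 in
lemma Rident (n k : ℕ) :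
    (Sprod (n+2) k : ℚ)/(Dprod k) * ((Sprod n (k+2) : ℚ)/(Dprod (k+2)))
      + ((Sprod (n+1) (k+1) : ℚ)/(Dprod (k+1)))^2
    = (Sprod (n+1) k : ℚ)/(Dprod k) * ((Sprod (n+1) (k+2) : ℚ)/(Dprod (k+2))) := by
  have n1 := A1' (n+1) k (2*n+k+2) (2*n+2*k+2) (by ring) (by ring)
  have n2 := A1' (n+1) (k+1) (2*n+k+3) (2*n+2*k+4) (by ring) (by ring)
  have n3 := A3' (n+1) k (2*n+k+2) (2*n+k+3) (2*n+2*k+2) (2*n+3)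
    (by ring) (by ring) (by ring) (by ring)
  have n4 := A3' n (k+2) (2*n+k+2) (2*n+k+3) (2*n+2*k+4) (2*n+1)
    (by ring) (by ring) (by ring) (by ring)
  have n5 := A2' k k (2*k) rfl rfl
  have n6 := A2' (k+1) (k+1) (2*k+2) rfl (by ring)
  have q1 : (Sprod (n+1) (k+1) : ℚ) * (2*n+k+2).factorial
      = (Sprod (n+1) k : ℚ) * (2*n+2*k+2).factorial := by exact_mod_cast n1
  have q2 : (Sprod (n+1) (k+2) : ℚ) * (2*n+k+3).factorial
      = (Sprod (n+1) (k+1) : ℚ) * (2*n+2*k+4).factorial := by exact_mod_cast n2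
  have q3 : (Sprod (n+2) k : ℚ) * ((2*n+k+2).factorial * (2*n+k+3).factorial)
      = (Sprod (n+1) k : ℚ) * ((2*n+2*k+2).factorial * (2*n+3).factorial) := by exact_mod_cast n3
  have q4 : (Sprod (n+1) (k+2) : ℚ) * ((2*n+k+2).factorial * (2*n+k+3).factorial)
      = (Sprod n (k+2) : ℚ) * ((2*n+2*k+4).factorial * (2*n+1).factorial) := by exact_mod_cast n4
  have q5 : (Dprod (k+1) : ℚ) * (k.factorial : ℕ)
      = (Dprod k : ℚ) * ((2*k).factorial : ℕ) := by exact_mod_cast n5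
  have q6 : (Dprod (k+2) : ℚ) * ((k+1).factorial : ℕ)
      = (Dprod (k+1) : ℚ) * ((2*k+2).factorial : ℕ) := by exact_mod_cast n6
  -- solve for the outer quantities in terms of the central ones
  have esK : (Sprod (n+1) k : ℚ)
      = (Sprod (n+1) (k+1) : ℚ) * (2*n+k+2).factorial / (2*n+2*k+2).factorial := by
    rw [eq_div_iff (hFne _)]; linear_combination -q1
  have es2 : (Sprod (n+1) (k+2) : ℚ)
      = (Sprod (n+1) (k+1) : ℚ) * (2*n+2*k+4).factorial / (2*n+k+3).factorial := by
    rw [eq_div_iff (hFne _)]; linear_combination q2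
  have hsA : (Sprod (n+2) k : ℚ) * (2*n+k+3).factorial
      = (Sprod (n+1) (k+1) : ℚ) * (2*n+3).factorial := by
    apply mul_left_cancel₀ (hFne (2*n+k+2))
    linear_combination q3 - (((2*n+3).factorial : ℕ) : ℚ) * q1
  have esA : (Sprod (n+2) k : ℚ)
      = (Sprod (n+1) (k+1) : ℚ) * (2*n+3).factorial / (2*n+k+3).factorial := by
    rw [eq_div_iff (hFne _)]; linear_combination hsA
  have hsB : (Sprod n (k+2) : ℚ) * (2*n+1).factorial
      = (Sprod (n+1) (k+1) : ℚ) * (2*n+k+2).factorial := by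
    apply mul_left_cancel₀ (hFne (2*n+2*k+4))
    linear_combination (((2*n+k+2).factorial : ℕ) : ℚ) * q2 - q4
  have esB : (Sprod n (k+2) : ℚ)
      = (Sprod (n+1) (k+1) : ℚ) * (2*n+k+2).factorial / (2*n+1).factorial := by
    rw [eq_div_iff (hFne _)]; linear_combination hsB
  have ed0 : (Dprod k : ℚ) = (Dprod (k+1) : ℚ) * k.factorial / (2*k).factorial := by
    rw [eq_div_iff (hFne _)]; linear_combination -q5
  have ed2 : (Dprod (k+2) : ℚ) = (Dprod (k+1) : ℚ) * (2*k+2).factorial / (k+1).factorial := by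
    rw [eq_div_iff (hFne _)]; linear_combination q6
  rw [esK, es2, esA, esB, ed0, ed2]
  have eF2 : (((2*n+k+3).factorial : ℕ) : ℚ) = (2*(n:ℚ)+(k:ℚ)+3) * (2*n+k+2).factorial := by
    have h : (2*n+k+3).factorial = (2*n+k+3) * (2*n+k+2).factorial :=
      factorial_eq_succ (by ring)
    push_cast [h]; ring
  have eFz : (((2*n+3).factorial : ℕ) : ℚ)
      = (2*(n:ℚ)+3) * ((2*(n:ℚ)+2) * (2*n+1).factorial) := by
    have h : (2*n+3).factorial = (2*n+3) * ((2*n+2) * (2*n+1).factorial) := by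
      rw [factorial_eq_succ (show 2*n+3 = (2*n+2)+1 by ring),
        factorial_eq_succ (show 2*n+2 = (2*n+1)+1 by ring)]
    push_cast [h]; ring
  have eF4 : (((2*n+2*k+4).factorial : ℕ) : ℚ)
      = (2*(n:ℚ)+2*(k:ℚ)+4) * ((2*(n:ℚ)+2*(k:ℚ)+3) * (2*n+2*k+2).factorial) := by
    have h : (2*n+2*k+4).factorial = (2*n+2*k+4) * ((2*n+2*k+3) * (2*n+2*k+2).factorial) := by
      rw [factorial_eq_succ (show 2*n+2*k+4 = (2*n+2*k+3)+1 by ring),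
        factorial_eq_succ (show 2*n+2*k+3 = (2*n+2*k+2)+1 by ring)]
    push_cast [h]; ring
  have eK2 : (((2*k+2).factorial : ℕ) : ℚ)
      = (2*(k:ℚ)+2) * ((2*(k:ℚ)+1) * (2*k).factorial) := by
    have h : (2*k+2).factorial = (2*k+2) * ((2*k+1) * (2*k).factorial) := by
      rw [factorial_eq_succ (show 2*k+2 = (2*k+1)+1 by ring),
        factorial_eq_succ (show 2*k+1 = (2*k)+1 by ring)]
    push_cast [h]; ring
  have eK1 : (((k+1).factorial : ℕ) : ℚ) = ((k:ℚ)+1) * (k.factorial : ℕ) := by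
    have h : (k+1).factorial = (k+1) * k.factorial := factorial_eq_succ rfl
    push_cast [h]; ring
  exact endgame _ _ _ _ _ _ _ _ _ _ _ _ (n:ℚ) (k:ℚ) eF2 eFz eF4 eK2 eK1
    (hFne _) (hFne _) (hFne _) (hFne _) (hFne _) (hDne _) (Nat.cast_nonneg n) (Nat.cast_nonneg k)

lemma base_end (c0 c1 S0 S1 D0 D1 fk f2k x : ℚ) (hfk : fk ≠ 0) (hf2k : f2k ≠ 0) (hx : 0 ≤ x)
    (hcat : (x+1)*((x+2)*c1) = 2*(2*x+1)*((x+1)*c0))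
    (hS : S1 * ((x+2)*((x+1)*fk)) = S0 * ((2*x+2)*((2*x+1)*f2k)))
    (hD : D1 * fk = D0 * f2k)
    (IH : c0 * D0 = S0) : c1 * D1 = S1 := by
  have h1 : (x:ℚ)+1 ≠ 0 := by positivity
  have h2 : (x:ℚ)+2 ≠ 0 := by positivity
  apply mul_left_cancel₀ (show (x+1)*(x+2)*fk ≠ 0 from by
    exact mul_ne_zero (mul_ne_zero h1 h2) hfk)
  linear_combination (fk*D1)*hcat + (2*(2*x+1)*(x+1)*c0)*hD + (2*(2*x+1)*(x+1)*f2k)*IH - hS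

lemma cat_base : ∀ k : ℕ, (catalan k : ℚ) * Dprod k = Sprod 1 k := by
  intro k
  induction k with
  | zero => simp [Sprod, Dprod]
  | succ k IH =>
    have hcat : (k+1) * ((k+1+1) * catalan (k+1)) = 2*(2*k+1)*((k+1)*catalan k) := by
      rw [succ_mul_catalan_eq_centralBinom, succ_mul_catalan_eq_centralBinom,
        Nat.succ_mul_centralBinom_succ]
    have hS := A1' 1 k (k+2) (2*k+2) (by ring) (by ring)
    have hD := A2 k
    have efk2 : ((k+2).factorial : ℚ) = ((k:ℚ)+2)*(((k:ℚ)+1) * (k.factorial : ℕ)) := by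
      have h : (k+2).factorial = (k+2)*((k+1) * k.factorial) := by
        rw [factorial_eq_succ (show k+2 = (k+1)+1 by ring), factorial_eq_succ rfl]
      push_cast [h]; ring
    have ef2k2 : (((2*k+2).factorial : ℕ) : ℚ)
        = (2*(k:ℚ)+2)*((2*(k:ℚ)+1) * ((2*k).factorial : ℕ)) := by
      have h : (2*k+2).factorial = (2*k+2)*((2*k+1) * (2*k).factorial) := by
        rw [factorial_eq_succ (show 2*k+2 = (2*k+1)+1 by ring),
          factorial_eq_succ (show 2*k+1 = (2*k)+1 by ring)]
      push_cast [h]; ring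
    have qcat : ((k:ℚ)+1) * (((k:ℚ)+2) * (catalan (k+1) : ℕ))
        = 2*(2*(k:ℚ)+1)*(((k:ℚ)+1)*(catalan k : ℕ)) := by exact_mod_cast hcat
    have qS : (Sprod 1 (k+1) : ℚ) * (((k:ℚ)+2)*(((k:ℚ)+1) * (k.factorial : ℕ)))
        = (Sprod 1 k : ℚ) * ((2*(k:ℚ)+2)*((2*(k:ℚ)+1) * ((2*k).factorial : ℕ))) := by
      rw [← efk2, ← ef2k2]; exact_mod_cast hS
    have qD : (Dprod (k+1) : ℚ) * (k.factorial : ℕ)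
        = (Dprod k : ℚ) * ((2*k).factorial : ℕ) := by exact_mod_cast hD
    exact base_end (catalan k : ℕ) _ _ _ _ _ _ _ (k:ℚ) (hFne k) (hFne (2*k))
      (Nat.cast_nonneg k) qcat qS qD IH

lemma hank_zero (k : ℕ) : (hank 0 k).det = 1 := Matrix.det_fin_zero

lemma hank_one (k : ℕ) : (hank 1 k).det = (catalan k : ℚ) := by
  rw [Matrix.det_fin_one]
  simp [hank]

lemma Sprod_zero (k : ℕ) : Sprod 0 k = Dprod k := by
  unfold Sprod Dprod
  exact Finset.prod_congr rfl fun j _ => Finset.prod_congr rfl fun i _ => by omega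

lemma main_claim : ∀ N k : ℕ, (hank N k).det = (Sprod N k : ℚ) / (Dprod k) := by
  intro N
  induction N using Nat.twoStepInduction with
  | zero =>
    intro k
    rw [hank_zero, Sprod_zero, div_self (hDne k)]
  | one =>
    intro k
    rw [hank_one, eq_div_iff (hDne k)]
    exact_mod_cast cat_base k
  | more n ih1 ih2 =>
    intro k
    have hrec := hankel_rec n k
    rw [ih1 (k+2), ih2 k, ih2 (k+1), ih2 (k+2)] at hrec
    have hR := Rident n k
    apply mul_right_cancel₀ (show (Sprod n (k+2) : ℚ)/(Dprod (k+2)) ≠ 0 from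
      div_ne_zero (hSne n (k+2)) (hDne (k+2)))
    rw [hrec]
    linear_combination -hR

lemma RHS_eq (n k : ℕ) :
    (∏ j ∈ Finset.Icc 1 (k - 1), ∏ i ∈ Finset.Icc 1 j, (((i:ℚ) + j + 2 * n) / ((i:ℚ) + j)))
      = (Sprod n k : ℚ) / (Dprod k) := by
  have step : ∀ j : ℕ, (∏ i ∈ Finset.Icc 1 j, (((i:ℚ) + j + 2 * n) / ((i:ℚ) + j)))
      = (∏ i ∈ Finset.Icc 1 j, ((i:ℚ) + j + 2 * n)) / (∏ i ∈ Finset.Icc 1 j, ((i:ℚ) + j)) :=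
    fun j => Finset.prod_div_distrib _ _
  rw [Finset.prod_congr rfl fun j _ => step j, Finset.prod_div_distrib, Sprod, Dprod]
  push_cast
  rfl

theorem stmt10 (n : ℕ) :
    (∀ k : ℕ,
      (Matrix.of fun i j : Fin n => (catalan ((i : ℕ) + (j : ℕ) + k) : ℚ)).det =
        ∏ j ∈ Finset.Icc 1 (k - 1), ∏ i ∈ Finset.Icc 1 j,
          ((i : ℚ) + j + 2 * n) / ((i : ℚ) + j)) ∧
    (Matrix.of fun i j : Fin n => (catalan ((i : ℕ) + (j : ℕ)) : ℚ)).det = 1 ∧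
    (Matrix.of fun i j : Fin n => (catalan ((i : ℕ) + (j : ℕ) + 1) : ℚ)).det = 1 := by
  have h1 : ∀ k : ℕ,
      (Matrix.of fun i j : Fin n => (catalan ((i : ℕ) + (j : ℕ) + k) : ℚ)).det =
        ∏ j ∈ Finset.Icc 1 (k - 1), ∏ i ∈ Finset.Icc 1 j,
          ((i : ℚ) + j + 2 * n) / ((i : ℚ) + j) := by
    intro k
    rw [RHS_eq n k]
    exact main_claim n k
  refine ⟨h1, ?_, ?_⟩
  · simpa using h1 0
  · simpa using h1 1
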